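/- arXiv:1409.2655 — 3 statements merged into one kernel-verified Lean document; each statement's English description precedes it below -/
import Mathlib

section
/- Define R₂(s, b, u) = b·(e^u - u - 1) - s·u for s ≥ 0, b > 0, u ∈ ℝ. If for some u ∈ ℝ and pairs (s₁,b₁), (s₂,b₂) with s_i ≥ 0, b_i > 0 we have R₂(s₂,b₂,u) < R₂(s₁,b₁,u) and u = log(s₁/b₁ + 1), then AMS₂(s₂,b₂) > AMS₂(s₁,b₁), where AMS₂(s,b) = sqrt(2·(b·((1+s/b)log(1+s/b) - s/b))). -/
/-- Weak duality: for all `u`, `s·u − b·(eᵘ−u−1) ≤ b·f₂(s/b)`. -/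
lemma aux_weak (s b u : ℝ) (hs : 0 ≤ s) (hb : 0 < b) :
    s * u - b * (Real.exp u - u - 1)
      ≤ b * ((1 + s / b) * Real.log (1 + s / b) - s / b) := by
  set t := s / b with ht
  have ht0 : 0 ≤ t := div_nonneg hs hb.le
  have h1t : 0 < 1 + t := by linarith
  set L := Real.log (1 + t) with hL
  have hexpL : Real.exp L = 1 + t := Real.exp_log h1t
  have key : (1 + t) * (1 + (u - L)) ≤ Real.exp u := by
    have h := Real.add_one_le_exp (u - L)
    have : Real.exp u = (1 + t) * Real.exp (u - L) := by
      rw [Real.exp_sub, hexpL]; field_simp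
    rw [this]
    have := Real.exp_pos (u - L)
    nlinarith
  have hsb : s = b * t := by rw [ht, mul_div_assoc', mul_comm, mul_div_assoc, div_self hb.ne', mul_one]
  rw [hsb]
  nlinarith [mul_le_mul_of_nonneg_left key hb.le]

/-- Cascade monotonicity for AMS₂: improving the dual objective `R₂` at the
optimal dual point `u = log(s₁/b₁ + 1)` strictly improves `AMS₂`. -/
theorem stmt_7 (s₁ b₁ s₂ b₂ u : ℝ)
    (hs₁ : 0 ≤ s₁) (hb₁ : 0 < b₁) (hs₂ : 0 ≤ s₂) (hb₂ : 0 < b₂)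
    (hu : u = Real.log (s₁ / b₁ + 1))
    (hR : b₂ * (Real.exp u - u - 1) - s₂ * u
        < b₁ * (Real.exp u - u - 1) - s₁ * u) :
    Real.sqrt (2 * (b₂ * ((1 + s₂ / b₂) * Real.log (1 + s₂ / b₂) - s₂ / b₂)))
      > Real.sqrt (2 * (b₁ * ((1 + s₁ / b₁) * Real.log (1 + s₁ / b₁) - s₁ / b₁))) := by
  have h1t : 0 < s₁ / b₁ + 1 := by positivity
  have hexpu : Real.exp u = s₁ / b₁ + 1 := by rw [hu, Real.exp_log h1t]
  -- equality at the optimal dual point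
  have heq : s₁ * u - b₁ * (Real.exp u - u - 1)
      = b₁ * ((1 + s₁ / b₁) * Real.log (1 + s₁ / b₁) - s₁ / b₁) := by
    have hlog : Real.log (1 + s₁ / b₁) = u := by rw [hu, add_comm]
    rw [hexpu, hlog]
    field_simp
    ring
  have hweak := aux_weak s₂ b₂ u hs₂ hb₂
  have hlt : b₁ * ((1 + s₁ / b₁) * Real.log (1 + s₁ / b₁) - s₁ / b₁)
      < b₂ * ((1 + s₂ / b₂) * Real.log (1 + s₂ / b₂) - s₂ / b₂) := by
    linarith
  have hnonneg : 0 ≤ b₁ * ((1 + s₁ / b₁) * Real.log (1 + s₁ / b₁) - s₁ / b₁) := by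
    have := aux_weak s₁ b₁ 0 hs₁ hb₁
    simpa using this
  exact Real.sqrt_lt_sqrt (by linarith) (by linarith)
end

section
/- For s ≥ 0 and b > 0, the function g(b') = b'·((1+s/b')·log(1+s/b') - s/b') is strictly decreasing in b' on (0, ∞) when s > 0. -/
/-- For `s > 0`, `b ↦ b·((1+s/b)log(1+s/b) - s/b)` is strictly decreasing on `(0, ∞)`. -/
theorem stmt_13 (s : ℝ) (hs : 0 < s) :
    StrictAntiOn
      (fun b : ℝ => b * ((1 + s / b) * Real.log (1 + s / b) - s / b))
      (Set.Ioi 0) := by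
  have heq : ∀ b ∈ Set.Ioi (0:ℝ),
      b * ((1 + s / b) * Real.log (1 + s / b) - s / b)
        = (b + s) * (Real.log (b + s) - Real.log b) - s := by
    intro b hb
    have hb0 : 0 < b := hb
    have h1 : 1 + s / b = (b + s) / b := by field_simp
    rw [h1, Real.log_div (by positivity) (ne_of_gt hb0)]
    field_simp
  have main : StrictAntiOn
      (fun b : ℝ => (b + s) * (Real.log (b + s) - Real.log b) - s) (Set.Ioi 0) := by
    apply strictAntiOn_of_deriv_neg (convex_Ioi 0)
    · apply ContinuousOn.sub _ continuousOn_const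
      apply ContinuousOn.mul (by fun_prop)
      apply ContinuousOn.sub
      · exact Real.continuousOn_log.comp (by fun_prop)
          (fun x hx => by
            have : (0:ℝ) < x := hx
            simp only [Set.mem_compl_iff, Set.mem_singleton_iff]
            positivity)
      · exact Real.continuousOn_log.mono (fun x hx => by
          have : (0:ℝ) < x := hx
          simp only [Set.mem_compl_iff, Set.mem_singleton_iff]
          positivity)
    · intro b hb
      rw [interior_Ioi] at hb
      have hb0 : (0:ℝ) < b := hb
      have hbs : (0:ℝ) < b + s := by positivity
      have d1 : HasDerivAt (fun x : ℝ => Real.log (x + s)) (1 / (b + s)) b := by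
        have := ((hasDerivAt_id b).add_const s).log (ne_of_gt hbs)
        simpa using this
      have d2 : HasDerivAt Real.log b⁻¹ b := Real.hasDerivAt_log (ne_of_gt hb0)
      have d : HasDerivAt (fun b : ℝ => (b + s) * (Real.log (b + s) - Real.log b) - s)
          (1 * (Real.log (b + s) - Real.log b) + (b + s) * (1 / (b + s) - b⁻¹)) b := by
        exact (((hasDerivAt_id b).add_const s).mul (d1.sub d2)).sub_const s
      rw [d.deriv]
      have hval : 1 * (Real.log (b + s) - Real.log b) + (b + s) * (1 / (b + s) - b⁻¹)
          = Real.log ((b + s) / b) - s / b := by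
        rw [Real.log_div (ne_of_gt hbs) (ne_of_gt hb0)]
        field_simp
        ring
      rw [hval]
      have hlt : Real.log ((b + s) / b) < (b + s) / b - 1 := by
        apply Real.log_lt_sub_one_of_pos (by positivity)
        intro h
        have : b + s = b := by
          field_simp at h
          linarith
        linarith
      have : (b + s) / b - 1 = s / b := by field_simp; ring
      linarith
  intro a ha b hb hab
  simp only
  rw [heq a ha, heq b hb]
  exact main ha hb hab
end

section
/- For s ≥ 0 and b > 0, suppose (s', b') with s' ≥ 0, b' > 0 satisfies b'·(e^u - u - 1) + (p - s')·u ≤ b·(e^u - u - 1) + (p - s)·u, where u = log(1 + s/b) and p ≥ max(s, s') is any constant. Then b'·f₂(s'/b') ≥ b·f₂(s/b), where f₂(t) = (1+t)log(1+t) - t. -/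
/-- Fenchel–Young type inequality: for `t ≥ 0`,
`t*u - ((1+t)log(1+t) - t) ≤ e^u - u - 1`. -/
lemma fenchel_aux (t u : ℝ) (ht : 0 ≤ t) :
    t * u - ((1 + t) * Real.log (1 + t) - t) ≤ Real.exp u - u - 1 := by
  have h1 : (0:ℝ) < 1 + t := by linarith
  have hexp : Real.exp u = (1 + t) * Real.exp (u - Real.log (1 + t)) := by
    rw [Real.exp_sub, Real.exp_log h1]
    field_simp
  have hbnd : (u - Real.log (1 + t)) + 1 ≤ Real.exp (u - Real.log (1 + t)) :=
    Real.add_one_le_exp _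
  nlinarith [mul_le_mul_of_nonneg_left hbnd (le_of_lt h1)]

/-- Weak improvement of the weighted classification objective at the optimal
dual point `u = log(1 + s/b)` yields weak improvement in `b·f₂(s/b)`. -/
theorem stmt_18 (s b s' b' p : ℝ)
    (hs : 0 ≤ s) (hb : 0 < b) (hs' : 0 ≤ s') (hb' : 0 < b')
    (hp : max s s' ≤ p)
    (hR : b' * (Real.exp (Real.log (1 + s / b)) - Real.log (1 + s / b) - 1)
            + (p - s') * Real.log (1 + s / b)
        ≤ b * (Real.exp (Real.log (1 + s / b)) - Real.log (1 + s / b) - 1)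
            + (p - s) * Real.log (1 + s / b)) :
    b * ((1 + s / b) * Real.log (1 + s / b) - s / b)
      ≤ b' * ((1 + s' / b') * Real.log (1 + s' / b') - s' / b') := by
  set u := Real.log (1 + s / b) with hu
  have hsb : 0 ≤ s / b := div_nonneg hs hb.le
  have h1 : (0:ℝ) < 1 + s / b := by linarith
  have hexp : Real.exp u = 1 + s / b := Real.exp_log h1
  rw [hexp] at hR
  have key := fenchel_aux (s' / b') u (div_nonneg hs' hb'.le)
  have hkey := mul_le_mul_of_nonneg_left key hb'.le
  rw [hexp] at hkey
  have e1 : b' * (s' / b' * u - ((1 + s' / b') * Real.log (1 + s' / b') - s' / b'))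
      = s' * u - b' * ((1 + s' / b') * Real.log (1 + s' / b') - s' / b') := by
    have h : b' * (s' / b' * u) = s' * u := by field_simp
    linear_combination h
  have e3 : b * ((1 + s / b) * u - s / b) = b * u + s * u - s := by
    field_simp
  have hseq : b * (s / b) = s := by field_simp
  have hs'seq : b' * (s / b) = b' * s / b := by ring
  linarith [hkey, hR, e1, e3, hseq]
end
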